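/- Let P(x) = Σ_{k=0}^K p_k x^k be a complex polynomial, ω(z) = 1/Γ(1−z), q_k = Σ_{ℓ=k}^K binom(ℓ,k) ω^{(ℓ−k)}(0) p_ℓ, and Q(x) = Σ_{k=0}^K q_k x^k. Then for every t > 0, P(ln t) = t ∫_0^∞ Q(−ln λ) e^{−tλ} dλ (the integral converging absolutely). -/

import Mathlib

open Set

/-- `ω(z) = 1/Γ(1−z)`. -/
noncomputable def omegaGamma : ℂ → ℂ := fun z => (Complex.Gamma (1 - z))⁻¹

open MeasureTheory Filter Asymptotics
open scoped Topology

private lemma itdw_open {f : ℂ → ℂ} {s : Set ℂ} {x : ℂ} (n : ℕ)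
    (hs : IsOpen s) (hx : x ∈ s) :
    iteratedDerivWithin n f s x = iteratedDeriv n f x := by
  rw [iteratedDerivWithin, iteratedDeriv, iteratedFDerivWithin_of_isOpen n hs hx]


private lemma pascal_sum (a b : ℕ → ℂ) (n : ℕ) :
    ((∑ k ∈ Finset.range (n + 1), (n.choose k : ℂ) * a (k + 1) * b (n - k))
      + ∑ k ∈ Finset.range (n + 1), (n.choose k : ℂ) * a k * b (n + 1 - k))
    = ∑ k ∈ Finset.range (n + 2), ((n + 1).choose k : ℂ) * a k * b (n + 1 - k) := by
  rw [Finset.sum_range_succ' (fun k => ((n + 1).choose k : ℂ) * a k * b (n + 1 - k)) (n + 1)]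
  simp only [Nat.choose_succ_succ, Nat.cast_add, add_mul, Nat.succ_sub_succ, Nat.choose_zero_right,
    Nat.cast_one, one_mul, Finset.sum_add_distrib]
  rw [Finset.sum_range_succ' (fun k => (n.choose k : ℂ) * a k * b (n + 1 - k)) n]
  rw [Finset.sum_range_succ (fun i => (n.choose (i + 1) : ℂ) * a (i + 1) * b (n - i)) n]
  simp only [Nat.choose_succ_self, Nat.cast_zero, zero_mul, add_zero, Nat.succ_sub_succ,
    Nat.choose_zero_right, Nat.cast_one, one_mul]
  ring

private lemma leibniz_within {U : Set ℂ} (hU : IsOpen U) {x : ℂ} (hx : x ∈ U) :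
    ∀ (n : ℕ) (f g : ℂ → ℂ), DifferentiableOn ℂ f U → DifferentiableOn ℂ g U →
      iteratedDerivWithin n (fun z => f z * g z) U x
        = ∑ k ∈ Finset.range (n + 1), (n.choose k : ℂ) *
            iteratedDerivWithin k f U x * iteratedDerivWithin (n - k) g U x := by
  have hUd : UniqueDiffOn ℂ U := hU.uniqueDiffOn
  intro n
  induction n with
  | zero => intro f g hf hg; simp
  | succ n ih =>
    intro f g hf hg
    have hfa : AnalyticOnNhd ℂ f U := hf.analyticOnNhd hU
    have hga : AnalyticOnNhd ℂ g U := hg.analyticOnNhd hU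
    have hf' : DifferentiableOn ℂ (derivWithin f U) U :=
      (hfa.deriv.differentiableOn).congr fun z hz => derivWithin_of_isOpen hU hz
    have hg' : DifferentiableOn ℂ (derivWithin g U) U :=
      (hga.deriv.differentiableOn).congr fun z hz => derivWithin_of_isOpen hU hz
    have congr1 : EqOn (derivWithin (fun z => f z * g z) U)
        (fun z => derivWithin f U z * g z + f z * derivWithin g U z) U := fun z hz =>
      derivWithin_fun_mul (hf z hz) (hg z hz)
    have hA : ContDiffOn ℂ n (fun z => derivWithin f U z * g z) U :=
      (((hf'.analyticOnNhd hU).mul hga).contDiffOn hUd)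
    have hB : ContDiffOn ℂ n (fun z => f z * derivWithin g U z) U :=
      ((hfa.mul (hg'.analyticOnNhd hU)).contDiffOn hUd)
    rw [iteratedDerivWithin_succ', iteratedDerivWithin_congr congr1 hx]
    have hadd : iteratedDerivWithin n
        (fun z => derivWithin f U z * g z + f z * derivWithin g U z) U x
        = iteratedDerivWithin n (fun z => derivWithin f U z * g z) U x
          + iteratedDerivWithin n (fun z => f z * derivWithin g U z) U x :=
      iteratedDerivWithin_fun_add hx hUd (hA x hx) (hB x hx)
    rw [hadd, ih _ _ hf' hg, ih _ _ hf hg']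
    have hfs : ∀ k, iteratedDerivWithin k (derivWithin f U) U x
        = iteratedDerivWithin (k + 1) f U x := fun k =>
      (congrFun iteratedDerivWithin_succ' x).symm
    have hgs : ∀ k, iteratedDerivWithin k (derivWithin g U) U x
        = iteratedDerivWithin (k + 1) g U x := fun k =>
      (congrFun iteratedDerivWithin_succ' x).symm
    simp_rw [hfs, hgs]
    have hidx : ∑ k ∈ Finset.range (n + 1), (n.choose k : ℂ) *
          iteratedDerivWithin k f U x * iteratedDerivWithin (n - k + 1) g U x
        = ∑ k ∈ Finset.range (n + 1), (n.choose k : ℂ) *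
          iteratedDerivWithin k f U x * iteratedDerivWithin (n + 1 - k) g U x :=
      Finset.sum_congr rfl fun k hk => by
        have hk' := Finset.mem_range.mp hk
        congr 2
        omega
    rw [hidx]
    exact pascal_sum (fun k => iteratedDerivWithin k f U x)
      (fun k => iteratedDerivWithin k g U x) n


private lemma key (t : ℝ) (ht : 0 < t) :
    (∀ m : ℕ, IntegrableOn
        (fun l : ℝ => (Real.log l : ℂ) ^ m * Complex.exp (-((t * l : ℝ) : ℂ))) (Ioi 0)) ∧
    ∀ ℓ : ℕ, ((Real.log t : ℂ)) ^ ℓ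
      = ∑ k ∈ Finset.range (ℓ + 1), (ℓ.choose k : ℂ) * iteratedDeriv (ℓ - k) omegaGamma 0 *
          ((t : ℂ) * (-1 : ℂ) ^ k *
            ∫ l in Ioi (0 : ℝ), (Real.log l : ℂ) ^ k * Complex.exp (-((t * l : ℝ) : ℂ))) := by
  set F : ℕ → ℝ → ℂ :=
    fun m l => (Real.log l : ℂ) ^ m * Complex.exp (-((t * l : ℝ) : ℂ)) with hF
  have hFsmul : ∀ m, (fun l : ℝ => Real.log l • F m l) = F (m + 1) := by
    intro m
    funext l
    simp only [hF, Complex.real_smul, pow_succ]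
    ring
  -- continuity / local integrability
  have hFc : ∀ m, LocallyIntegrableOn (F m) (Ioi 0) := by
    intro m
    apply ContinuousOn.locallyIntegrableOn _ measurableSet_Ioi
    apply ContinuousOn.mul
    · exact (Complex.continuous_ofReal.comp_continuousOn
        (Real.continuousOn_log.mono (by intro x hx; simpa using ne_of_gt hx))).pow m
    · exact (Complex.continuous_exp.comp
        ((Complex.continuous_ofReal.comp (continuous_const.mul continuous_id')).neg)).continuousOn
  -- big O at top
  have hFtop : ∀ m (a : ℝ), F m =O[atTop] (· ^ (-a)) := by
    intro m
    induction m with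
    | zero =>
      intro a
      rw [← isBigO_norm_left]
      have : (fun l : ℝ => ‖F 0 l‖) = fun l => Real.exp (-t * l) := by
        funext l
        simp [hF, Complex.norm_exp, neg_mul]
      rw [this]
      exact (isLittleO_exp_neg_mul_rpow_atTop ht (-a)).isBigO
    | succ m ih =>
      intro a
      have := isBigO_rpow_top_log_smul (lt_add_one a) (ih (a + 1))
      rwa [hFsmul m] at this
  -- big O at 0
  have hFbot : ∀ m {b : ℝ}, 0 < b → F m =O[𝓝[>] (0:ℝ)] (· ^ (-b)) := by
    intro m
    induction m with
    | zero =>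
      intro b hb
      have h1 : F 0 =O[𝓝[>] (0:ℝ)] (fun _ => (1 : ℂ)) := by
        refine isBigO_const_of_tendsto (?_ : Tendsto _ _ (𝓝 (1 : ℂ))) one_ne_zero
        have : Continuous (fun l : ℝ => F 0 l) := by
          simp only [hF, pow_zero, one_mul]
          exact Complex.continuous_exp.comp
            ((Complex.continuous_ofReal.comp (continuous_const.mul continuous_id')).neg)
        have h0 : F 0 0 = 1 := by simp [hF]
        simpa [h0] using (this.tendsto 0).mono_left nhdsWithin_le_nhds
      refine h1.trans ?_
      rw [isBigO_iff]
      refine ⟨1, ?_⟩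
      filter_upwards [Ioo_mem_nhdsGT_of_mem (by norm_num : (0:ℝ) ∈ Ico (0:ℝ) 1)] with x hx
      have hx0 : 0 < x := hx.1
      have : (1:ℝ) ≤ x ^ (-b) := by
        rw [show (1:ℝ) = x ^ (0:ℝ) by simp]
        exact Real.rpow_le_rpow_of_exponent_ge hx0 hx.2.le (by linarith)
      simpa [Real.norm_eq_abs, abs_of_pos (Real.rpow_pos_of_pos hx0 _)] using this
    | succ m ih =>
      intro b hb
      have := isBigO_rpow_zero_log_smul (half_lt_self hb) (ih (half_pos hb))
      rwa [hFsmul m] at this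
  -- integrability
  have hInt : ∀ m, IntegrableOn (F m) (Ioi 0) := by
    intro m
    have h := mellinConvergent_of_isBigO_rpow (s := 1) (hFc m) (hFtop m 2)
      (by norm_num) (hFbot m (by norm_num : (0:ℝ) < 1/2)) (by norm_num)
    rw [MellinConvergent] at h
    refine h.congr_fun (fun x hx => ?_) measurableSet_Ioi
    simp
  have hmel1 : ∀ k, mellin (F k) 1 = ∫ l in Ioi (0:ℝ), F k l := by
    intro k
    simp only [mellin, sub_self, Complex.cpow_zero, one_smul]
  -- the open set
  have hU : IsOpen (Complex.re ⁻¹' Ioo (-(1:ℝ)/2) (1/2)) :=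
    isOpen_Ioo.preimage Complex.continuous_re
  set U : Set ℂ := Complex.re ⁻¹' Ioo (-(1:ℝ)/2) (1/2) with hUdef
  have hUd : UniqueDiffOn ℂ U := hU.uniqueDiffOn
  have h0U : (0:ℂ) ∈ U := by
    simp only [hUdef, mem_preimage, Complex.zero_re, mem_Ioo]
    norm_num
  set N : ℕ → ℂ → ℂ := fun m z => mellin (F m) (1 - z) with hN
  have hre : ∀ z ∈ U, 0 < (1 - z).re ∧ (1 - z).re < 2 := by
    intro z hz
    simp only [hUdef, mem_preimage, mem_Ioo] at hz
    constructor <;> simp only [Complex.sub_re, Complex.one_re] <;> linarith [hz.1, hz.2]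
  have hNderiv : ∀ m, ∀ z ∈ U, HasDerivAt (N m) (-(N (m+1) z)) z := by
    intro m z hz
    obtain ⟨h1, h2⟩ := hre z hz
    have hmel := (mellin_hasDerivAt_of_isBigO_rpow (s := 1 - z) (a := 2) (b := (1-z).re/2)
      (hFc m) (hFtop m 2) h2 (hFbot m (by linarith)) (by linarith)).2
    rw [hFsmul m] at hmel
    have hinner : HasDerivAt (fun w : ℂ => 1 - w) (-1) z := (hasDerivAt_id z).const_sub 1
    have hcomp := HasDerivAt.comp z hmel hinner
    have h' : HasDerivAt (N m) (mellin (F (m+1)) (1 - z) * -1) z := hcomp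
    simpa [hN] using h'
  have hNdiff : ∀ m, DifferentiableOn ℂ (N m) U := fun m z hz =>
    ((hNderiv m z hz).differentiableAt).differentiableWithinAt
  have hNcd : ∀ m, ContDiffOn ℂ (⊤ : ℕ∞) (N m) U :=
    fun m => ((hNdiff m).analyticOnNhd hU).contDiffOn hUd
  -- iterated derivatives of N
  have claimA : ∀ (k m : ℕ), iteratedDerivWithin k (N m) U 0 = (-1:ℂ)^k * N (m+k) 0 := by
    intro k
    induction k with
    | zero => intro m; simp
    | succ k ih =>
      intro m
      rw [iteratedDerivWithin_succ']
      have congr1 : EqOn (derivWithin (N m) U) (fun z => -(N (m+1) z)) U := fun z hz => by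
        rw [derivWithin_of_isOpen hU hz]
        exact (hNderiv m z hz).deriv
      rw [iteratedDerivWithin_congr congr1 h0U,
        iteratedDerivWithin_fun_neg, ih (m+1)]
      rw [show m + 1 + k = m + (k + 1) by omega]
      ring
  -- iterated derivatives of t^z
  have hcpowder : ∀ z : ℂ, HasDerivAt (fun w : ℂ => (t:ℂ)^w) ((Real.log t : ℂ) * (t:ℂ)^z) z := by
    intro z
    have htne : (t:ℂ) ≠ 0 := by
      simp only [ne_eq, Complex.ofReal_eq_zero]
      exact ht.ne'
    have h1 : HasDerivAt (fun w : ℂ => Complex.log t * w) (Complex.log t) z := by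
      simpa using (hasDerivAt_id z).const_mul (Complex.log (t:ℂ))
    have h2 := h1.cexp
    have hfun : (fun w : ℂ => Complex.exp (Complex.log t * w)) = fun w : ℂ => (t:ℂ)^w := by
      funext w
      rw [Complex.cpow_def_of_ne_zero htne]
    rw [hfun] at h2
    have h3 : Complex.exp (Complex.log t * z) = (t:ℂ)^z := by
      rw [Complex.cpow_def_of_ne_zero htne]
    rw [h3] at h2
    rw [← Complex.ofReal_log ht.le] at h2
    simpa [mul_comm] using h2
  have hcpowdiff : DifferentiableOn ℂ (fun w : ℂ => (t:ℂ)^w) U := fun z _ =>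
    (hcpowder z).differentiableAt.differentiableWithinAt
  have hcpowcd : ContDiffOn ℂ (⊤ : ℕ∞) (fun w : ℂ => (t:ℂ)^w) U :=
    (hcpowdiff.analyticOnNhd hU).contDiffOn hUd
  have hcpow : ∀ ℓ : ℕ, iteratedDerivWithin ℓ (fun w : ℂ => (t:ℂ)^w) U 0
      = (Real.log t : ℂ)^ℓ := by
    have main : ∀ (ℓ : ℕ) (x : ℂ), x ∈ U → iteratedDerivWithin ℓ (fun w : ℂ => (t:ℂ)^w) U x
        = (Real.log t : ℂ)^ℓ * (t:ℂ)^x := by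
      intro ℓ
      induction ℓ with
      | zero => intro x hx; simp
      | succ ℓ ih =>
        intro x hx
        rw [iteratedDerivWithin_succ']
        have congr1 : EqOn (derivWithin (fun w : ℂ => (t:ℂ)^w) U)
            (fun z => (Real.log t : ℂ) * (t:ℂ)^z) U := fun z hz => by
          rw [derivWithin_of_isOpen hU hz]
          exact (hcpowder z).deriv
        rw [iteratedDerivWithin_congr congr1 hx,
          iteratedDerivWithin_const_mul hx hUd _ (hcpowcd.of_le (by exact_mod_cast le_top) x hx), ih x hx, pow_succ]
        ring
    intro ℓ
    have := main ℓ 0 h0U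
    simpa using this
  -- the value of omega * (t * N 0)
  have hval : ∀ z ∈ U, omegaGamma z * ((t:ℂ) * N 0 z) = (t:ℂ)^z := by
    intro z hz
    have htne : (t:ℂ) ≠ 0 := by
      simp only [ne_eq, Complex.ofReal_eq_zero]
      exact ht.ne'
    have hF0 : F 0 = fun l : ℝ => ((Real.exp (-(t * l)) : ℝ) : ℂ) := by
      funext l
      simp [hF, Complex.ofReal_exp]
    have hmc : N 0 z = (t:ℂ)^(-(1-z)) * Complex.GammaIntegral (1 - z) := by
      rw [hN]
      simp only
      rw [hF0]
      have : (fun l : ℝ => ((Real.exp (-(t * l)) : ℝ) : ℂ))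
          = fun l : ℝ => (fun x : ℝ => ((Real.exp (-x) : ℝ) : ℂ)) (t * l) := rfl
      have hcm := mellin_comp_mul_left (fun x : ℝ => ((Real.exp (-x) : ℝ) : ℂ)) (1 - z) ht
      rw [this, hcm, Complex.GammaIntegral_eq_mellin]
      simp [smul_eq_mul]
    have hGam : Complex.GammaIntegral (1 - z) = Complex.Gamma (1 - z) :=
      (Complex.Gamma_eq_integral (hre z hz).1).symm
    have hGne : Complex.Gamma (1 - z) ≠ 0 := by
      apply Complex.Gamma_ne_zero
      intro m h
      have h1 := (hre z hz).1
      rw [h] at h1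
      simp only [Complex.neg_re, Complex.natCast_re] at h1
      have : (0:ℝ) ≤ m := Nat.cast_nonneg m
      linarith
    have hpow : (t:ℂ) * (t:ℂ)^(-(1-z)) = (t:ℂ)^z := by
      have : (t:ℂ)^z = (t:ℂ)^((-(1-z)) + 1) := by ring_nf
      rw [this, Complex.cpow_add _ _ htne, Complex.cpow_one]
      ring
    rw [hmc, hGam, omegaGamma]
    field_simp
    rw [← hpow]
  -- differentiability of omega
  have homega : DifferentiableOn ℂ omegaGamma U := by
    have : Differentiable ℂ omegaGamma := by
      have h1 : Differentiable ℂ (fun z : ℂ => (1:ℂ) - z) :=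
        (differentiable_const 1).sub differentiable_id
      exact Complex.differentiable_one_div_Gamma.comp h1
    exact this.differentiableOn
  have hHt : DifferentiableOn ℂ (fun z => (t:ℂ) * N 0 z) U :=
    (differentiableOn_const _).mul (hNdiff 0)
  -- Leibniz
  refine ⟨fun m => hInt m, ?_⟩
  intro ℓ
  have heq : EqOn (fun z => omegaGamma z * ((t:ℂ) * N 0 z)) (fun w : ℂ => (t:ℂ)^w) U :=
    fun z hz => hval z hz
  have step1 : (Real.log t : ℂ)^ℓ
      = iteratedDerivWithin ℓ (fun z => omegaGamma z * ((t:ℂ) * N 0 z)) U 0 := by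
    rw [iteratedDerivWithin_congr heq h0U, hcpow ℓ]
  have step2 := leibniz_within hU h0U ℓ omegaGamma (fun z => (t:ℂ) * N 0 z) homega hHt
  have hHtit : ∀ j : ℕ, iteratedDerivWithin j (fun z => (t:ℂ) * N 0 z) U 0
      = (t:ℂ) * ((-1:ℂ)^j * N j 0) := by
    intro j
    rw [iteratedDerivWithin_const_mul h0U hUd _ ((hNcd 0).of_le (by exact_mod_cast le_top) 0 h0U), claimA j 0]
    simp
  have homit : ∀ j : ℕ, iteratedDerivWithin j omegaGamma U 0 = iteratedDeriv j omegaGamma 0 :=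
    fun j => itdw_open j hU h0U
  have hN0 : ∀ j : ℕ, N j 0 = ∫ l in Ioi (0:ℝ), F j l := by
    intro j
    rw [hN]
    simp only [sub_zero]
    exact hmel1 j
  rw [step1, step2]
  rw [← Finset.sum_range_reflect]
  simp only [Nat.add_sub_cancel]
  refine Finset.sum_congr rfl fun k hk => ?_
  have hkℓ : k ≤ ℓ := by
    have := Finset.mem_range.mp hk
    omega
  rw [homit, hHtit, hN0]
  rw [Nat.choose_symm hkℓ, Nat.sub_sub_self hkℓ]
  have hFk : (∫ l in Ioi (0:ℝ), (Real.log l : ℂ) ^ k * Complex.exp (-((t * l : ℝ) : ℂ)))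
      = ∫ l in Ioi (0:ℝ), F k l := rfl
  rw [hFk]
  ring


/-- The polynomial `P(x) = ∑ p_k x^k` is recovered from `Q(x) = ∑ q_k x^k`, where
`q_k = ∑_{ℓ=k}^K binom(ℓ,k) ω^{(ℓ−k)}(0) p_ℓ`, by the formula
`P(ln t) = t ∫_0^∞ Q(−ln λ) e^{−tλ} dλ`, the integral converging absolutely. -/
theorem P_recovered_from_Q
    (K : ℕ) (p q : ℕ → ℂ)
    (hq : ∀ k, q k = ∑ ℓ ∈ Finset.Icc k K,
      (ℓ.choose k : ℂ) * iteratedDeriv (ℓ - k) omegaGamma 0 * p ℓ)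
    (P Q : ℝ → ℂ)
    (hP : ∀ x : ℝ, P x = ∑ k ∈ Finset.range (K + 1), p k * (x : ℂ) ^ k)
    (hQ : ∀ x : ℝ, Q x = ∑ k ∈ Finset.range (K + 1), q k * (x : ℂ) ^ k)
    (t : ℝ) (ht : 0 < t) :
    MeasureTheory.IntegrableOn
        (fun l : ℝ => Q (-Real.log l) * Complex.exp (-((t * l : ℝ) : ℂ))) (Ioi 0) ∧
      P (Real.log t)
        = (t : ℂ) * ∫ l in Ioi (0 : ℝ), Q (-Real.log l) * Complex.exp (-((t * l : ℝ) : ℂ)) := by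
  obtain ⟨hInt, hkey⟩ := key t ht
  set G : ℕ → ℝ → ℂ :=
    fun k l => (Real.log l : ℂ) ^ k * Complex.exp (-((t * l : ℝ) : ℂ)) with hG
  have hfun : (fun l : ℝ => Q (-Real.log l) * Complex.exp (-((t * l : ℝ) : ℂ)))
      = fun l : ℝ => ∑ k ∈ Finset.range (K + 1), (q k * (-1 : ℂ) ^ k) * G k l := by
    funext l
    rw [hQ, Finset.sum_mul]
    refine Finset.sum_congr rfl fun k _ => ?_
    rw [hG]
    push_cast
    ring
  have hIntShow : IntegrableOn
      (fun l : ℝ => Q (-Real.log l) * Complex.exp (-((t * l : ℝ) : ℂ))) (Ioi 0) := by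
    rw [hfun]
    exact integrable_finset_sum _ fun k _ => (hInt k).const_mul _
  refine ⟨hIntShow, ?_⟩
  have hIntEq : (∫ l in Ioi (0:ℝ), Q (-Real.log l) * Complex.exp (-((t * l : ℝ) : ℂ)))
      = ∑ k ∈ Finset.range (K + 1), (q k * (-1 : ℂ) ^ k) * ∫ l in Ioi (0:ℝ), G k l := by
    rw [hfun, integral_finset_sum _ fun k _ => (hInt k).const_mul _]
    exact Finset.sum_congr rfl fun k _ => integral_const_mul _ _
  rw [hIntEq, Finset.mul_sum]
  have hRHS : ∑ k ∈ Finset.range (K + 1),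
        (t : ℂ) * ((q k * (-1 : ℂ) ^ k) * ∫ l in Ioi (0:ℝ), G k l)
      = ∑ k ∈ Finset.range (K + 1),
        q k * ((t : ℂ) * (-1 : ℂ) ^ k * ∫ l in Ioi (0:ℝ), G k l) :=
    Finset.sum_congr rfl fun k _ => by ring
  rw [hRHS, hP]
  have hstep : ∀ ℓ ∈ Finset.range (K + 1),
      p ℓ * ((Real.log t : ℝ) : ℂ) ^ ℓ
        = ∑ k ∈ Finset.range (ℓ + 1), p ℓ * ((ℓ.choose k : ℂ) *
            iteratedDeriv (ℓ - k) omegaGamma 0 *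
            ((t : ℂ) * (-1 : ℂ) ^ k * ∫ l in Ioi (0:ℝ), G k l)) := by
    intro ℓ _
    rw [← Finset.mul_sum, ← hkey ℓ]
  rw [Finset.sum_congr rfl hstep]
  rw [Finset.sum_comm' (t' := Finset.range (K + 1)) (s' := fun k => Finset.Icc k K)
    (by
      intro ℓ k
      simp only [Finset.mem_range, Finset.mem_Icc]
      omega)]
  refine Finset.sum_congr rfl fun k _ => ?_
  rw [hq k, Finset.sum_mul]
  refine Finset.sum_congr rfl fun ℓ _ => ?_
  ring
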